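/- Let F = F_p G be a product of differentiable invertible 3×3 matrix-valued functions, with Ḟ = L F and Ġ = L_p G. Set B_p = F_p F_pᵀ, C_p = F_pᵀ F_p, and D_p = (L_p + L_pᵀ)/2. Then Ḃ_p = L B_p + B_p Lᵀ − 2 F_p D_p F_pᵀ. -/

import Mathlib

open Matrix

private lemma entry_mul_deriv (A B : ℝ → Matrix (Fin 3) (Fin 3) ℝ)
    (A' B' : Matrix (Fin 3) (Fin 3) ℝ) (t : ℝ)
    (hA : ∀ i j, HasDerivAt (fun s => A s i j) (A' i j) t)
    (hB : ∀ i j, HasDerivAt (fun s => B s i j) (B' i j) t) (i j : Fin 3) :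
    HasDerivAt (fun s => (A s * B s) i j) ((A' * B t + A t * B') i j) t := by
  simp only [Matrix.mul_apply, Matrix.add_apply]
  rw [← Finset.sum_add_distrib]
  exact HasDerivAt.fun_sum fun k _ => (hA i k).mul (hB k j)

/-- with `F = F_p G`, `Ḟ = L F`, `Ġ = L_p G`, `B_p = F_p F_pᵀ`,
`D_p = (L_p + L_pᵀ)/2`, one has `Ḃ_p = L B_p + B_p Lᵀ − 2 F_p D_p F_pᵀ`
(entrywise derivatives). -/
theorem natural_configuration_evolution
    (Fp G L Lp : ℝ → Matrix (Fin 3) (Fin 3) ℝ)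
    (hFpinv : ∀ t : ℝ, IsUnit (Fp t)) (hGinv : ∀ t : ℝ, IsUnit (G t))
    (hFp : ∀ (t : ℝ) (i j : Fin 3), DifferentiableAt ℝ (fun s => Fp s i j) t)
    (hG : ∀ (t : ℝ) (i j : Fin 3), HasDerivAt (fun s => G s i j) ((Lp t * G t) i j) t)
    (hF : ∀ (t : ℝ) (i j : Fin 3),
        HasDerivAt (fun s => (Fp s * G s) i j) ((L t * (Fp t * G t)) i j) t)
    (Bp : ℝ → Matrix (Fin 3) (Fin 3) ℝ) (hBp : ∀ t, Bp t = Fp t * (Fp t)ᵀ)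
    (Dp : ℝ → Matrix (Fin 3) (Fin 3) ℝ) (hDp : ∀ t, Dp t = (1 / 2 : ℝ) • (Lp t + (Lp t)ᵀ))
    (t : ℝ) (i j : Fin 3) :
    HasDerivAt (fun s => Bp s i j)
      ((L t * Bp t + Bp t * (L t)ᵀ - 2 • (Fp t * Dp t * (Fp t)ᵀ)) i j) t := by
  -- derivative of Fp
  set Fp' : Matrix (Fin 3) (Fin 3) ℝ :=
    Matrix.of fun i j => deriv (fun s => Fp s i j) t with hFp'def
  have hFp' : ∀ i j, HasDerivAt (fun s => Fp s i j) (Fp' i j) t :=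
    fun i j => (hFp t i j).hasDerivAt
  -- product rule on F = Fp G
  have hprod : ∀ i j, HasDerivAt (fun s => (Fp s * G s) i j)
      ((Fp' * G t + Fp t * (Lp t * G t)) i j) t :=
    entry_mul_deriv Fp G Fp' (Lp t * G t) t hFp' (hG t)
  have heq : Fp' * G t + Fp t * (Lp t * G t) = L t * (Fp t * G t) := by
    ext i j
    exact (hprod i j).unique (hF t i j)
  -- cancel G
  have hFp'eq : Fp' = L t * Fp t - Fp t * Lp t := by
    have h2 : (Fp' + Fp t * Lp t) * G t = (L t * Fp t) * G t := by
      rw [add_mul]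
      calc Fp' * G t + Fp t * Lp t * G t
          = Fp' * G t + Fp t * (Lp t * G t) := by rw [mul_assoc]
        _ = L t * (Fp t * G t) := heq
        _ = (L t * Fp t) * G t := by rw [mul_assoc]
    have := (hGinv t).mul_right_cancel h2
    linear_combination (norm := noncomm_ring) this
  -- derivative of Bp = Fp Fpᵀ
  have hFpT : ∀ i j, HasDerivAt (fun s => (Fp s)ᵀ i j) (Fp'ᵀ i j) t :=
    fun i j => hFp' j i
  have hB : ∀ i j, HasDerivAt (fun s => (Fp s * (Fp s)ᵀ) i j)
      ((Fp' * (Fp t)ᵀ + Fp t * Fp'ᵀ) i j) t :=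
    entry_mul_deriv Fp (fun s => (Fp s)ᵀ) Fp' Fp'ᵀ t hFp' hFpT
  have hfun : (fun s => Bp s i j) = (fun s => (Fp s * (Fp s)ᵀ) i j) := by
    funext s; rw [hBp s]
  rw [hfun]
  have hmat : L t * Bp t + Bp t * (L t)ᵀ - 2 • (Fp t * Dp t * (Fp t)ᵀ)
      = Fp' * (Fp t)ᵀ + Fp t * Fp'ᵀ := by
    rw [hFp'eq, hBp, hDp, transpose_sub, transpose_mul, transpose_mul]
    have h2s : (2 : ℕ) • (Fp t * ((1 / 2 : ℝ) • (Lp t + (Lp t)ᵀ)) * (Fp t)ᵀ)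
        = Fp t * (Lp t + (Lp t)ᵀ) * (Fp t)ᵀ := by
      rw [Matrix.mul_smul, Matrix.smul_mul, ← Nat.cast_smul_eq_nsmul ℝ, smul_smul]
      norm_num
    rw [h2s]
    noncomm_ring
  rw [hmat]
  exact hB i j
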